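/- Let q = p^r be a prime power with p ≥ 5 and let λ_1, λ_2, λ_3 ∈ F_q with λ_3 ≠ 0. Let χ : F_q³ → ℂ^× be the group homomorphism (for the group law (a_1,a_2,a_3)·(b_1,b_2,b_3) = (a_1+b_1, a_2+a_1b_1+b_2, a_3+a_1b_2+a_2b_1+b_3)) given by χ(a_1,a_2,a_3) = χ_q(λ_1a_1 + λ_2(a_2 − a_1²/2) + λ_3(a_3 − a_1a_2 + a_1³/3)). For n ≥ 0 let c_n(χ) = ∑_f χ(a_1(f),a_2(f),a_3(f)), summed over monic f ∈ F_q[T] of degree n, where a_j(f) is the coefficient of T^{n−j} in f. Then, with a = λ_3/3 ∈ F_q^× and b = λ_1 − λ_2²/(4λ_3) ∈ F_q, there exists an integer c with 0 ≤ c < p such that c_2(χ) = q · ω_p^{2c} and c_1(χ) = ω_p^c · ∑_{x ∈ F_q} χ_q(a·x³ + b·x), where ω_p = e^{2πi/p}. Equivalently, L(u/(√q·ω_p^c), χ) = 1 + (∑_{x ∈ F_q} χ_q(ax³+bx)/√q)·u + u². -/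

import Mathlib

open Polynomial Finset

/-- The monic polynomial `X^n + ∑_{i<n} c i · X^i` of degree `n` determined by its
lower coefficients `c : Fin n → F`. -/
noncomputable def polyOf {F : Type*} [Field F] (n : ℕ) (c : Fin n → F) : F[X] :=
  X ^ n + ∑ i : Fin n, C (c i) * X ^ (i : ℕ)

/-- The `j`-th next-to-leading coefficient (coefficient of `T^(n-j)`) of `polyOf n c`,
with the convention that it is `0` for `j > n`. -/
noncomputable def coefOf {F : Type*} [Field F] (n : ℕ) (c : Fin n → F) (j : ℕ) : F :=
  if j ≤ n then (polyOf n c).coeff (n - j) else 0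

-- The polynomial von Mangoldt function: `Λ(f) = deg P` if `f = P^k` with `P`
-- monic irreducible and `k ≥ 1`, and `0` otherwise.
open scoped Classical in
noncomputable def Lam {F : Type*} [Field F] (f : F[X]) : ℕ :=
  if h : ∃ P : F[X], P.Monic ∧ Irreducible P ∧ ∃ k : ℕ, 1 ≤ k ∧ f = P ^ k
  then h.choose.natDegree else 0

-- `ψ_q(n, t 1, …, t ℓ)`: the sum of `Λ` over all monic polynomials of degree `n`
-- whose first `ℓ` next-to-leading coefficients are `t 1, …, t ℓ` (with the convention
-- that the `j`-th next-to-leading coefficient is `0` for `j > n`).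
open scoped Classical in
noncomputable def psiSum {F : Type*} [Field F] [Fintype F] (n ℓ : ℕ) (t : ℕ → F) : ℕ :=
  ∑ c : Fin n → F,
    if ∀ j : ℕ, 1 ≤ j → j ≤ ℓ → coefOf n c j = t j then Lam (polyOf n c) else 0

/-- Packaging three prescribed coefficients into a function `ℕ → F`. -/
def t3fun {F : Type*} [Field F] (t1 t2 t3 : F) : ℕ → F :=
  fun j => if j = 1 then t1 else if j = 2 then t2 else if j = 3 then t3 else 0

-- `c_n(χ)`: the sum over all monic polynomials `f` of degree `n` of `χ` applied to
-- the triple of the first three next-to-leading coefficients of `f`.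
noncomputable def charSum3 {F : Type*} [Field F] [Fintype F]
    (χ : F → F → F → ℂ) (n : ℕ) : ℂ :=
  ∑ c : Fin n → F, χ (coefOf n c 1) (coefOf n c 2) (coefOf n c 3)

-- The canonical additive character `χ_q(a) = exp(2πi·Tr_{F_q/F_p}(a)/p)` of `F_q`.
noncomputable def traceChar (p r : ℕ) [Fact p.Prime] (a : GaloisField p r) : ℂ :=
  Complex.exp (2 * Real.pi * Complex.I *
    ((Algebra.trace (ZMod p) (GaloisField p r) a).val : ℂ) / p)


lemma coefOf_one_one {F : Type*} [Field F] (c : Fin 1 → F) : coefOf 1 c 1 = c 0 := by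
  simp [coefOf, polyOf]

lemma coefOf_one_two {F : Type*} [Field F] (c : Fin 1 → F) : coefOf 1 c 2 = 0 := by
  simp [coefOf]

lemma coefOf_one_three {F : Type*} [Field F] (c : Fin 1 → F) : coefOf 1 c 3 = 0 := by
  simp [coefOf]

lemma coefOf_two_one {F : Type*} [Field F] (c : Fin 2 → F) : coefOf 2 c 1 = c 1 := by
  simp [coefOf, polyOf, Fin.sum_univ_two, coeff_X_pow]

lemma coefOf_two_two {F : Type*} [Field F] (c : Fin 2 → F) : coefOf 2 c 2 = c 0 := by
  simp [coefOf, polyOf, Fin.sum_univ_two, coeff_X_pow]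

lemma coefOf_two_three {F : Type*} [Field F] (c : Fin 2 → F) : coefOf 2 c 3 = 0 := by
  simp [coefOf]

/-- For `q = p^r`, `p ≥ 5`, and the character `χ` of `F_q³`
determined by `λ₁,λ₂,λ₃` with `λ₃ ≠ 0`, there is `0 ≤ c < p` such that
`c₂(χ) = q·ω_p^{2c}` and `c₁(χ) = ω_p^c · ∑_x χ_q(ax³+bx)` where `a = λ₃/3` and
`b = λ₁ − λ₂²/(4λ₃)`; equivalently
`L(u/(√q·ω_p^c), χ) = 1 + (∑_x χ_q(ax³+bx)/√q)u + u²`. -/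
theorem char_Lfunction_cubic_sum (p r : ℕ) [Fact p.Prime] (hp : 5 ≤ p) (hr : 1 ≤ r)
    [Fintype (GaloisField p r)]
    (l1 l2 l3 : GaloisField p r) (hl3 : l3 ≠ 0) :
    ∃ c : ℕ, c < p ∧
      charSum3 (fun a1 a2 a3 => traceChar p r
          (l1 * a1 + l2 * (a2 - a1 ^ 2 / 2) + l3 * (a3 - a1 * a2 + a1 ^ 3 / 3))) 2
        = ((p : ℂ) ^ r) * Complex.exp (2 * Real.pi * Complex.I / p) ^ (2 * c)
      ∧ charSum3 (fun a1 a2 a3 => traceChar p r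
          (l1 * a1 + l2 * (a2 - a1 ^ 2 / 2) + l3 * (a3 - a1 * a2 + a1 ^ 3 / 3))) 1
        = Complex.exp (2 * Real.pi * Complex.I / p) ^ c *
            ∑ x : GaloisField p r,
              traceChar p r ((l3 / 3) * x ^ 3 + (l1 - l2 ^ 2 / (4 * l3)) * x) := by
  classical
  haveI : NeZero p := ⟨by omega⟩
  set ω : ℂ := Complex.exp (2 * Real.pi * Complex.I / p) with hω
  have hroot : IsPrimitiveRoot ω p := Complex.isPrimitiveRoot_exp p (by omega)
  have hζ : ω ^ p = 1 := hroot.pow_eq_one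
  set ψ : AddChar (GaloisField p r) ℂ :=
    (AddChar.zmodChar p hζ).compAddMonoidHom
      (Algebra.trace (ZMod p) (GaloisField p r)).toAddMonoidHom with hψdef
  have hψ_apply : ∀ x : GaloisField p r,
      ψ x = ω ^ (Algebra.trace (ZMod p) (GaloisField p r) x).val := by
    intro x
    simp [hψdef, AddChar.compAddMonoidHom_apply, AddChar.zmodChar_apply]
  have hψ_eq : ∀ x : GaloisField p r, traceChar p r x = ψ x := by
    intro x
    rw [hψ_apply, traceChar, ← Complex.exp_nat_mul]
    congr 1
    ring
  have hTsurj : Function.Surjective (Algebra.trace (ZMod p) (GaloisField p r)) :=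
    Algebra.trace_surjective (ZMod p) (GaloisField p r)
  obtain ⟨x0, hx0⟩ := hTsurj 1
  have hψne : ψ ≠ 1 := by
    intro h
    have h1 : ψ x0 = 1 := by rw [h]; rfl
    rw [hψ_apply, hx0, ZMod.val_one_eq_one_mod, Nat.mod_eq_of_lt (by omega), pow_one] at h1
    exact hroot.ne_one (by omega) h1
  have hprim : ψ.IsPrimitive := AddChar.IsPrimitive.of_ne_one hψne
  have hsum : ∀ b : GaloisField p r, ∑ x : GaloisField p r, ψ (x * b)
      = if b = 0 then (Fintype.card (GaloisField p r) : ℂ) else 0 :=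
    fun b => by rw [AddChar.sum_mulShift b hprim]; split_ifs <;> simp
  have hcard : (Fintype.card (GaloisField p r) : ℂ) = (p : ℂ) ^ r := by
    have h := GaloisField.card p r (by omega)
    rw [Nat.card_eq_fintype_card] at h
    rw [h]; push_cast; ring
  have h2 : (2 : GaloisField p r) ≠ 0 := by
    intro h
    have hd := (CharP.cast_eq_zero_iff (GaloisField p r) p 2).mp h
    have := Nat.le_of_dvd (by norm_num) hd
    omega
  have h3 : (3 : GaloisField p r) ≠ 0 := by
    intro h
    have hd := (CharP.cast_eq_zero_iff (GaloisField p r) p 3).mp h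
    have := Nat.le_of_dvd (by norm_num) hd
    omega
  have h4 : (4 : GaloisField p r) ≠ 0 := by
    have h44 : (4 : GaloisField p r) = 2 * 2 := by norm_num
    rw [h44]; exact mul_ne_zero h2 h2
  have h6 : (6 : GaloisField p r) ≠ 0 := by
    have h66 : (6 : GaloisField p r) = 2 * 3 := by norm_num
    rw [h66]; exact mul_ne_zero h2 h3
  have h12 : (12 : GaloisField p r) ≠ 0 := by
    have h1212 : (12 : GaloisField p r) = 4 * 3 := by norm_num
    rw [h1212]; exact mul_ne_zero h4 h3
  have h4608 : (4608 : GaloisField p r) ≠ 0 := by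
    have he : (4608 : GaloisField p r) = 2 ^ 9 * 3 ^ 2 := by norm_num
    rw [he]; exact mul_ne_zero (pow_ne_zero _ h2) (pow_ne_zero _ h3)
  have hl38 : l3 ^ 8 ≠ 0 := pow_ne_zero _ hl3
  set s : GaloisField p r := -l2 / (2 * l3) with hs
  set konst : GaloisField p r := l2 ^ 3 / (12 * l3 ^ 2) - l1 * l2 / (2 * l3) with hkonst
  refine ⟨(Algebra.trace (ZMod p) (GaloisField p r) (-konst)).val, ZMod.val_lt _, ?_, ?_⟩
  · -- c₂
    have hωc : ω ^ (Algebra.trace (ZMod p) (GaloisField p r) (-konst)).val = ψ (-konst) :=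
      (hψ_apply _).symm
    simp only [charSum3, coefOf_two_one, coefOf_two_two, coefOf_two_three, hψ_eq]
    calc ∑ cc : Fin 2 → GaloisField p r,
          ψ (l1 * cc 1 + l2 * (cc 0 - cc 1 ^ 2 / 2) + l3 * (0 - cc 1 * cc 0 + cc 1 ^ 3 / 3))
        = ∑ z : GaloisField p r × GaloisField p r,
            ψ (l1 * z.2 + l2 * (z.1 - z.2 ^ 2 / 2) + l3 * (0 - z.2 * z.1 + z.2 ^ 3 / 3)) :=
          Fintype.sum_equiv (finTwoArrowEquiv (GaloisField p r)) _ _ (fun cc => rfl)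
      _ = ∑ a2 : GaloisField p r, ∑ a1 : GaloisField p r,
            ψ (l1 * a1 + l2 * (a2 - a1 ^ 2 / 2) + l3 * (0 - a1 * a2 + a1 ^ 3 / 3)) :=
          Fintype.sum_prod_type _
      _ = ∑ a1 : GaloisField p r, ∑ a2 : GaloisField p r,
            ψ (l1 * a1 + l2 * (a2 - a1 ^ 2 / 2) + l3 * (0 - a1 * a2 + a1 ^ 3 / 3)) :=
          Finset.sum_comm
      _ = ∑ a1 : GaloisField p r, ψ (l1 * a1 - l2 * a1 ^ 2 / 2 + l3 * a1 ^ 3 / 3) *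
            (if l2 - l3 * a1 = 0 then (Fintype.card (GaloisField p r) : ℂ) else 0) := by
          refine Finset.sum_congr rfl fun a1 _ => ?_
          rw [← hsum (l2 - l3 * a1), Finset.mul_sum]
          refine Finset.sum_congr rfl fun a2 _ => ?_
          rw [← ψ.map_add_eq_mul]
          congr 1
          ring
      _ = ∑ a1 : GaloisField p r, (if a1 = l2 / l3 then
            ψ (l1 * a1 - l2 * a1 ^ 2 / 2 + l3 * a1 ^ 3 / 3) *
              (Fintype.card (GaloisField p r) : ℂ) else 0) := by
          refine Finset.sum_congr rfl fun a1 _ => ?_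
          have hiff : (l2 - l3 * a1 = 0) ↔ (a1 = l2 / l3) := by
            rw [sub_eq_zero, eq_div_iff hl3]
            constructor <;> intro h <;> linear_combination -h
          rw [hiff]
          split_ifs <;> simp
      _ = ψ (l1 * (l2 / l3) - l2 * (l2 / l3) ^ 2 / 2 + l3 * (l2 / l3) ^ 3 / 3) *
            (Fintype.card (GaloisField p r) : ℂ) := by
          rw [Finset.sum_ite_eq' Finset.univ (l2 / l3)]
          simp
      _ = (p : ℂ) ^ r *
            ω ^ (2 * (Algebra.trace (ZMod p) (GaloisField p r) (-konst)).val) := by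
          have harg : l1 * (l2 / l3) - l2 * (l2 / l3) ^ 2 / 2 + l3 * (l2 / l3) ^ 3 / 3
              = -konst + -konst := by
            rw [hkonst]
            field_simp [hl3, h2, h3, h4, h6, h12, h4608, hl38]
            ring
          rw [harg, ψ.map_add_eq_mul, hcard, two_mul, pow_add, hωc]
          ring
  · -- c₁
    have hωc : ω ^ (Algebra.trace (ZMod p) (GaloisField p r) (-konst)).val = ψ (-konst) :=
      (hψ_apply _).symm
    simp only [charSum3, coefOf_one_one, coefOf_one_two, coefOf_one_three, hψ_eq]
    calc ∑ cc : Fin 1 → GaloisField p r,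
          ψ (l1 * cc 0 + l2 * (0 - cc 0 ^ 2 / 2) + l3 * (0 - cc 0 * 0 + cc 0 ^ 3 / 3))
        = ∑ y : GaloisField p r,
            ψ (l1 * y + l2 * (0 - y ^ 2 / 2) + l3 * (0 - y * 0 + y ^ 3 / 3)) :=
          Fintype.sum_equiv (Equiv.funUnique (Fin 1) (GaloisField p r)) _ _ (fun cc => rfl)
      _ = ∑ y : GaloisField p r,
            ψ (l3 / 3 * (y + s) ^ 3 + (l1 - l2 ^ 2 / (4 * l3)) * (y + s) - konst) := by
          refine Finset.sum_congr rfl fun y _ => ?_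
          congr 1
          rw [hs, hkonst]
          field_simp [hl3, h2, h3, h4, h6, h12, h4608, hl38]
          ring
      _ = ∑ y : GaloisField p r, ψ (-konst) *
            ψ (l3 / 3 * (y + s) ^ 3 + (l1 - l2 ^ 2 / (4 * l3)) * (y + s)) := by
          refine Finset.sum_congr rfl fun y _ => ?_
          rw [← ψ.map_add_eq_mul]
          congr 1
          ring
      _ = ψ (-konst) * ∑ y : GaloisField p r,
            ψ (l3 / 3 * (y + s) ^ 3 + (l1 - l2 ^ 2 / (4 * l3)) * (y + s)) :=
          (Finset.mul_sum _ _ _).symm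
      _ = ω ^ (Algebra.trace (ZMod p) (GaloisField p r) (-konst)).val *
            ∑ x : GaloisField p r, ψ (l3 / 3 * x ^ 3 + (l1 - l2 ^ 2 / (4 * l3)) * x) := by
          rw [hωc]
          congr 1
          refine Fintype.sum_equiv (Equiv.addRight s) _ _ fun y => ?_
          rw [Equiv.coe_addRight]
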